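/- If H and K are equal impartial games (H + K is a P-position), then G ∘ H and G ∘ K are equal, i.e., (G ∘ H) + (G ∘ K) is a P-position. -/

import Mathlib

/-- Finite impartial games, given by their (finite list of) options. -/
inductive IGame : Type where
  | mk : List IGame → IGame

/-- The empty game `E`, with no options. -/
abbrev E : IGame := .mk []

/-- The list of options of a game. -/
def IGame.opts : IGame → List IGame
  | .mk l => l

theorem IGame.sizeOf_lt_of_mem {g : IGame} {l : List IGame} (h : g ∈ l) :
    sizeOf g < sizeOf (IGame.mk l) := by
  have := List.sizeOf_lt_of_mem h
  simp only [IGame.mk.sizeOf_spec]; omega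

/-- The pass operator: `E* = E`; for `G` with options, `G*` has options
`G` together with `g*` for each option `g` of `G`. -/
def pass : IGame → IGame
  | .mk [] => .mk []
  | .mk l => .mk (.mk l :: l.attach.map fun g => pass g.1)
decreasing_by
  exact IGame.sizeOf_lt_of_mem g.2

/-- The split sum `G ∘ H`. -/
def split : IGame → IGame → IGame
  | .mk [], _ => .mk []
  | .mk gs, .mk [] => .mk gs
  | .mk gs, .mk hs =>
      .mk ((hs.attach.map fun h => split (.mk gs) h.1) ++
           (gs.attach.map fun g => split g.1 (.mk hs)))
termination_by G H => sizeOf G + sizeOf H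
decreasing_by
  · have := IGame.sizeOf_lt_of_mem h.2; omega
  · have := IGame.sizeOf_lt_of_mem g.2; omega

/-- Disjunctive sum of games. -/
def addG : IGame → IGame → IGame
  | .mk gs, .mk hs =>
      .mk ((gs.attach.map fun g => addG g.1 (.mk hs)) ++
           (hs.attach.map fun h => addG (.mk gs) h.1))
termination_by G H => sizeOf G + sizeOf H
decreasing_by
  · have := IGame.sizeOf_lt_of_mem g.2; omega
  · have := IGame.sizeOf_lt_of_mem h.2; omega

/-- The nimber `*n`, with options `*0, …, *(n-1)`. -/
def star : ℕ → IGame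
  | n => .mk ((List.range n).attach.map fun k => star k.1)
termination_by n => n
decreasing_by have := List.mem_range.mp k.2; omega

/-- `G` is a P-position (previous player wins under normal play):
every option is an N-position. -/
def PPos : IGame → Prop
  | .mk l => ∀ g ∈ l.attach, ¬ PPos g.1
decreasing_by exact IGame.sizeOf_lt_of_mem g.2

/-- Identity of game trees (extensionally: same set of options, recursively). -/
def Ident : IGame → IGame → Prop
  | .mk gs, .mk hs =>
      (∀ g ∈ gs.attach, ∃ h ∈ hs.attach, Ident g.1 h.1) ∧
      (∀ h ∈ hs.attach, ∃ g ∈ gs.attach, Ident g.1 h.1)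
termination_by G H => sizeOf G + sizeOf H
decreasing_by
  · have := IGame.sizeOf_lt_of_mem g.2
    have := IGame.sizeOf_lt_of_mem h.2; omega
  · have := IGame.sizeOf_lt_of_mem g.2
    have := IGame.sizeOf_lt_of_mem h.2; omega

/-! ### mex -/

private theorem le_foldr_max (l : List ℕ) : ∀ n ∈ l, n ≤ l.foldr max 0 := by
  induction l with
  | nil => simp
  | cons a t ih =>
    intro n hn
    simp only [List.mem_cons] at hn
    rcases hn with rfl | hn
    · simp [List.foldr]
    · have := ih n hn; simp [List.foldr]; omega

private theorem mex_exists (l : List ℕ) : ∃ n, n ∉ l :=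
  ⟨l.foldr max 0 + 1, fun h => by have := le_foldr_max l _ h; omega⟩

def mex (l : List ℕ) : ℕ := Nat.find (mex_exists l)

theorem mex_not_mem (l : List ℕ) : mex l ∉ l := Nat.find_spec (mex_exists l)

theorem mem_of_lt_mex {l : List ℕ} {k : ℕ} (h : k < mex l) : k ∈ l := by
  have := Nat.find_min (mex_exists l) h
  simpa using this

theorem mex_eq_of {l : List ℕ} {m : ℕ} (h1 : m ∉ l) (h2 : ∀ k < m, k ∈ l) :
    mex l = m := by
  rcases lt_trichotomy (mex l) m with h | h | h
  · exact absurd (h2 _ h) (mex_not_mem l)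
  · exact h
  · exact absurd (mem_of_lt_mex h) h1

theorem mex_eq_zero_iff {l : List ℕ} : mex l = 0 ↔ 0 ∉ l := by
  constructor
  · intro h hm; exact mex_not_mem l (h ▸ hm)
  · intro h; exact mex_eq_of h (by omega)

/-! ### grundy -/

def grundy : IGame → ℕ
  | .mk l => mex (l.attach.map fun g => grundy g.1)
decreasing_by exact IGame.sizeOf_lt_of_mem g.2

theorem grundy_mk (l : List IGame) : grundy (.mk l) = mex (l.map grundy) := by
  rw [grundy]
  congr 1
  exact List.attach_map_val  -- may need adjustment

theorem grundy_ne_of_mem {g : IGame} {l : List IGame} (h : g ∈ l) :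
    grundy g ≠ grundy (.mk l) := by
  intro he
  rw [grundy_mk] at he
  exact mex_not_mem _ (he ▸ List.mem_map_of_mem (f := grundy) h)

theorem exists_grundy_opt {l : List IGame} {v : ℕ} (h : v < grundy (.mk l)) :
    ∃ g ∈ l, grundy g = v := by
  rw [grundy_mk] at h
  have := mem_of_lt_mex h
  simpa using this

/-! ### PPos -/

theorem PPos_mk (l : List IGame) : PPos (.mk l) ↔ ∀ g ∈ l, ¬ PPos g := by
  rw [PPos]; simp

theorem PPos_iff_grundy : ∀ X : IGame, PPos X ↔ grundy X = 0
  | .mk l => by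
    rw [PPos_mk, grundy_mk, mex_eq_zero_iff]
    constructor
    · intro h hm
      simp only [List.mem_map] at hm
      obtain ⟨g, hg, hg0⟩ := hm
      exact h g hg ((PPos_iff_grundy g).2 hg0)
    · intro h g hg hp
      have h0 := (PPos_iff_grundy g).1 hp
      exact h (h0 ▸ List.mem_map_of_mem (f := grundy) hg)
decreasing_by all_goals exact IGame.sizeOf_lt_of_mem hg

/-! ### addG -/

theorem addG_mk (gs hs : List IGame) : addG (.mk gs) (.mk hs) =
    .mk ((gs.map fun g => addG g (.mk hs)) ++ (hs.map fun h => addG (.mk gs) h)) := by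
  rw [addG]; simp

theorem PPos_addG : ∀ X Y : IGame, (PPos (addG X Y) ↔ grundy X = grundy Y)
  | .mk xs, .mk ys => by
    rw [addG_mk, PPos_mk]
    constructor
    · intro h
      by_contra hne
      rcases Nat.lt_or_ge (grundy (.mk xs)) (grundy (.mk ys)) with hlt | hge
      · obtain ⟨y, hy, hgy⟩ := exists_grundy_opt hlt
        exact h _ (by simp; right; exact ⟨y, hy, rfl⟩)
          ((PPos_addG (.mk xs) y).2 hgy.symm)
      · have hlt : grundy (.mk ys) < grundy (.mk xs) := by omega
        obtain ⟨x, hx, hgx⟩ := exists_grundy_opt hlt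
        exact h _ (by simp; left; exact ⟨x, hx, rfl⟩)
          ((PPos_addG x (.mk ys)).2 hgx)
    · intro h g hg hp
      simp only [List.mem_append, List.mem_map] at hg
      rcases hg with ⟨x, hx, rfl⟩ | ⟨y, hy, rfl⟩
      · have := (PPos_addG x (.mk ys)).1 hp
        exact grundy_ne_of_mem hx (this.trans h.symm)
      · have := (PPos_addG (.mk xs) y).1 hp
        exact grundy_ne_of_mem hy (this.symm.trans h)
termination_by X Y => sizeOf X + sizeOf Y
decreasing_by
  all_goals first
    | (have := IGame.sizeOf_lt_of_mem hy; omega)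
    | (have := IGame.sizeOf_lt_of_mem hx; omega)
/-! ### split -/

theorem grundy_E : grundy (.mk []) = 0 := by
  rw [grundy_mk]; simp [mex_eq_zero_iff]

theorem split_empty_left (H : IGame) : split (.mk []) H = .mk [] := by rw [split]

theorem split_empty_right : ∀ G : IGame, split G (.mk []) = G
  | .mk [] => by rw [split]
  | .mk (g :: gs) => by rw [split] <;> simp

theorem split_cons (g h : IGame) (gs hs : List IGame) :
    split (.mk (g::gs)) (.mk (h::hs)) =
    .mk (((h::hs).map fun x => split (.mk (g::gs)) x) ++
         ((g::gs).map fun x => split x (.mk (h::hs)))) := by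
  rw [split] <;> simp

/-- The grundy values of the options of `split G H`, for `G` nonempty. -/
def splitOpts (G H : IGame) : List ℕ :=
  (H.opts.map fun h => grundy (split G h)) ++ (G.opts.map fun g => grundy (split g H))

theorem grundy_split_eq : ∀ (G H : IGame), G.opts ≠ [] →
    grundy (split G H) = mex (splitOpts G H)
  | .mk [], _, hne => absurd rfl hne
  | .mk (g :: gs), .mk [], _ => by
    rw [split_empty_right, grundy_mk]
    unfold splitOpts IGame.opts
    simp only [List.map_nil, List.nil_append]
    congr 1
    apply List.map_congr_left
    intro x _
    rw [split_empty_right]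
  | .mk (g :: gs), .mk (h :: hs), _ => by
    rw [split_cons, grundy_mk]
    unfold splitOpts IGame.opts
    simp [List.map_append, Function.comp_def]

theorem mem_splitOpts_left {G H h : IGame} (hh : h ∈ H.opts) :
    grundy (split G h) ∈ splitOpts G H :=
  List.mem_append.2 (Or.inl (List.mem_map_of_mem (f := fun h => grundy (split G h)) hh))

theorem mem_splitOpts_right {G H g : IGame} (hg : g ∈ G.opts) :
    grundy (split g H) ∈ splitOpts G H :=
  List.mem_append.2 (Or.inr (List.mem_map_of_mem (f := fun g => grundy (split g H)) hg))

theorem opts_grundy_ne {G g : IGame} (hg : g ∈ G.opts) : grundy g ≠ grundy G := by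
  cases G with
  | mk l => exact grundy_ne_of_mem hg

theorem opts_exists_grundy {G : IGame} {v : ℕ} (h : v < grundy G) :
    ∃ g ∈ G.opts, grundy g = v := by
  cases G with
  | mk l => exact exists_grundy_opt h

theorem opts_nonempty_of_grundy {G : IGame} (h : grundy G ≠ 0) : G.opts ≠ [] := by
  cases G with
  | mk l =>
    intro he
    simp only [IGame.opts] at he
    subst he
    exact h grundy_E

theorem sizeOf_opts_lt {g G : IGame} (hg : g ∈ G.opts) : sizeOf g < sizeOf G := by
  cases G with
  | mk l => exact IGame.sizeOf_lt_of_mem hg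

mutual

theorem split_grundy (G H K : IGame) (hgr : grundy H = grundy K) :
    grundy (split G H) = grundy (split G K) := by
  obtain ⟨l⟩ := G
  cases l with
  | nil => rw [split_empty_left, split_empty_left]
  | cons g gs =>
    set G : IGame := .mk (g :: gs) with hG
    have hne : G.opts ≠ [] := by simp [hG, IGame.opts]
    have hm := grundy_split_eq G H hne
    have hn := grundy_split_eq G K hne
    have h1 : grundy (split G H) ∉ splitOpts G K := split_notMem G H K hne hgr
    have h2 : grundy (split G K) ∉ splitOpts G H := split_notMem G K H hne hgr.symm
    rcases lt_trichotomy (grundy (split G H)) (grundy (split G K)) with h | h | h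
    · rw [hn] at h; exact absurd (mem_of_lt_mex h) h1
    · exact h
    · rw [hm] at h; exact absurd (mem_of_lt_mex h) h2
termination_by (2 * (sizeOf G + sizeOf H + sizeOf K) + 1, 0)
decreasing_by
  · exact Prod.Lex.left _ _ (by omega)
  · exact Prod.Lex.left _ _ (by omega)

theorem split_notMem (G H K : IGame) (hne : G.opts ≠ []) (hgr : grundy H = grundy K) :
    grundy (split G H) ∉ splitOpts G K := by
  have hm := grundy_split_eq G H hne
  intro hmem
  rcases List.mem_append.1 hmem with hmem | hmem
  · -- grundy (split G H) = grundy (split G k) for some k ∈ K.opts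
    obtain ⟨k, hk, hkeq⟩ := List.mem_map.1 hmem
    by_cases hh : ∃ h ∈ H.opts, grundy h = grundy k
    · obtain ⟨h, hh, hheq⟩ := hh
      have := split_grundy G h k hheq
      have hin : grundy (split G H) ∈ splitOpts G H := by
        rw [← hkeq, ← this]; exact mem_splitOpts_left hh
      rw [hm] at hin
      exact mex_not_mem _ hin
    · push_neg at hh
      -- grundy k > grundy K
      have hk1 : grundy H ≤ grundy k := by
        by_contra hlt
        obtain ⟨h, hhm, hheq⟩ := opts_exists_grundy (by omega : grundy k < grundy H)
        exact hh h hhm hheq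
      have hk2 : grundy k ≠ grundy K := opts_grundy_ne hk
      have hk3 : grundy H < grundy k := by omega
      have hkne : k.opts ≠ [] := opts_nonempty_of_grundy (by omega)
      obtain ⟨k', hk', hk'eq⟩ := opts_exists_grundy hk3
      have heq : grundy (split G k') = grundy (split G H) :=
        split_grundy G k' H hk'eq
      have hin : grundy (split G H) ∈ splitOpts G k := by
        rw [← heq]; exact mem_splitOpts_left hk'
      rw [← hkeq, grundy_split_eq G k hne] at hin
      exact mex_not_mem _ hin
  · -- grundy (split G H) = grundy (split g K) for some g ∈ G.opts
    obtain ⟨g, hg, hgeq⟩ := List.mem_map.1 hmem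
    have := split_grundy g H K hgr
    have hin : grundy (split G H) ∈ splitOpts G H := by
      rw [← hgeq, ← this]; exact mem_splitOpts_right hg
    rw [hm] at hin
    exact mex_not_mem _ hin
termination_by (2 * (sizeOf G + sizeOf H + sizeOf K), 0)
decreasing_by
  · exact Prod.Lex.left _ _ (by
      have := sizeOf_opts_lt hh; have := sizeOf_opts_lt hk; omega)
  · exact Prod.Lex.left _ _ (by
      have h1 := sizeOf_opts_lt hk'; have h2 := sizeOf_opts_lt hk; omega)
  · exact Prod.Lex.left _ _ (by have := sizeOf_opts_lt hg; omega)

end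

/-- if `H = K` (i.e. `H + K` is a P-position) then
`G ∘ H = G ∘ K` (i.e. `(G ∘ H) + (G ∘ K)` is a P-position). -/
theorem split_congr_right (G H K : IGame) (h : PPos (addG H K)) :
    PPos (addG (split G H) (split G K)) := by
  have hgr : grundy H = grundy K := (PPos_addG H K).1 h
  exact (PPos_addG _ _).2 (split_grundy G H K hgr)
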